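/- Let G be a graph with self-loops of order n whose eigenvalues are all strictly positive. Then G is the disjoint union of n copies of K_1 with a loop attached; equivalently, the adjacency matrix of G is the identity matrix I_n. -/

import Mathlib

open Matrix Finset

/-- The diagonal 0-1 matrix indicating the loop vertices in `S`. -/
def loopMat (n : ℕ) (S : Finset (Fin n)) : Matrix (Fin n) (Fin n) ℝ :=
  Matrix.of fun i j => if i = j ∧ i ∈ S then 1 else 0

lemma posDef_of_eigenvalues_pos {n : ℕ} {A : Matrix (Fin n) (Fin n) ℝ} (hA : A.IsHermitian)
    (h : ∀ i, 0 < hA.eigenvalues i) : A.PosDef := by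
  refine posDef_iff_dotProduct_mulVec.mpr ⟨hA, fun x hx => ?_⟩
  set U := (hA.eigenvectorUnitary : Matrix (Fin n) (Fin n) ℝ) with hU
  have hUU : U * star U = 1 := mem_unitaryGroup_iff.mp hA.eigenvectorUnitary.2
  set y := star U *ᵥ x with hy
  have hyne : y ≠ 0 := by
    intro hc
    apply hx
    have : U *ᵥ y = U *ᵥ 0 := by rw [hc]
    rwa [hy, mulVec_mulVec, hUU, one_mulVec, mulVec_zero] at this
  have hD : (Matrix.diagonal (RCLike.ofReal ∘ hA.eigenvalues) : Matrix (Fin n) (Fin n) ℝ).PosDef :=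
    .diagonal (fun i => by simpa using h i)
  have hsy : star y = star x ᵥ* U := by
    rw [hy, star_mulVec]; simp [Matrix.star_eq_conjTranspose]
  have key : star x ⬝ᵥ (A *ᵥ x) = star y ⬝ᵥ ((Matrix.diagonal (RCLike.ofReal ∘ hA.eigenvalues)) *ᵥ y) := by
    conv_lhs => rw [hA.spectral_theorem, Unitary.conjStarAlgAut_apply]
    rw [← hU, mul_assoc, ← mulVec_mulVec, dotProduct_mulVec, ← hsy, ← mulVec_mulVec, ← hy]
  rw [key]
  exact hD.dotProduct_mulVec_pos hyne

/-- a self-loop graph all of whose eigenvalues are strictly positive is the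
disjoint union of `n` copies of `K₁` with a loop, i.e. its adjacency matrix is `I_n`. -/
theorem pos_eigenvalues_iff_identity (n : ℕ) (G : SimpleGraph (Fin n)) [DecidableRel G.Adj]
    (S : Finset (Fin n))
    (hA : (G.adjMatrix ℝ + loopMat n S).IsHermitian)
    (hpos : ∀ i, 0 < hA.eigenvalues i) :
    G.adjMatrix ℝ + loopMat n S = 1 := by
  set A := G.adjMatrix ℝ + loopMat n S with hAdef
  have hPD : A.PosDef := posDef_of_eigenvalues_pos hA hpos
  have hdiagpos : ∀ i, 0 < A i i := by
    intro i
    have := hPD.dotProduct_mulVec_pos (x := Pi.single i 1) (by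
      intro h; simpa using congrFun h i)
    simpa [dotProduct, mulVec, Pi.single_apply] using this
  have hdiag : ∀ i, A i i = 1 := by
    intro i
    have h0 : A i i = if i ∈ S then 1 else 0 := by
      simp [hAdef, loopMat, Matrix.add_apply]
    by_cases h : i ∈ S
    · simp [h0, h]
    · exfalso
      have := hdiagpos i
      rw [h0] at this
      simp [h] at this
  have hoff : ∀ i j, i ≠ j → A i j = 0 := by
    intro i j hij
    have hxne : (Pi.single i 1 - Pi.single j 1 : Fin n → ℝ) ≠ 0 := by
      intro h
      have := congrFun h i
      simp [Pi.single_apply, hij] at this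
    have hq := hPD.dotProduct_mulVec_pos hxne
    have hsymm : A j i = A i j := by
      have := congrFun (congrFun hA.eq j) i
      simpa [conjTranspose_apply] using this.symm
    have hval : star (Pi.single i 1 - Pi.single j 1 : Fin n → ℝ) ⬝ᵥ
        (A *ᵥ (Pi.single i 1 - Pi.single j 1)) = 2 - 2 * A i j := by
      simp [dotProduct, mulVec, Pi.single_apply, sub_mul, mul_sub,
        Finset.sum_sub_distrib, hdiag, hsymm, hij, hij.symm]
      ring
    rw [hval] at hq
    have hlt : A i j < 1 := by linarith
    have h01 : A i j = 0 ∨ A i j = 1 := by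
      simp [hAdef, loopMat, Matrix.add_apply, hij]
      by_cases hadj : G.Adj i j <;> simp [hadj]
    rcases h01 with h | h
    · exact h
    · exact absurd h (by linarith)
  ext i j
  by_cases hij : i = j
  · subst hij; simp [hdiag i, Matrix.one_apply]
  · simp [hoff i j hij, Matrix.one_apply, hij]
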